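/- Let ([0,1], L, λ) be the unit interval with Lebesgue measure. Let (A₁, ..., Aₙ) and (B₁, ..., Bₙ) be two measurable partitions of [0,1]. Then there exist measurable partitions (A₁', ..., Aₙ') and (B₁', ..., Bₙ') with λ(A_i') = λ(A_i) and λ(B_i') = λ(B_i) for all i, such that λ(A_i' Δ B_i') = |λ(A_i) − λ(B_i)| for every i ≤ n. -/

import Mathlib

open MeasureTheory Set

namespace PartCoupling

variable {n : ℕ}

/-- partial sum of `c` over indices `< i` -/
noncomputable def S (c : Fin n → ℝ) (i : Fin n) : ℝ := ∑ j ∈ Finset.Iio i, c j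

/-- the `i`-th segment of a consecutive-interval partition starting at offset `o` -/
noncomputable def seg (o : ℝ) (c : Fin n → ℝ) (i : Fin n) : Set ℝ :=
  Ico (o + S c i) (o + S c i + c i)

lemma S_nonneg {c : Fin n → ℝ} (hc : ∀ i, 0 ≤ c i) (i : Fin n) : 0 ≤ S c i :=
  Finset.sum_nonneg fun j _ => hc j

lemma S_add_le {c : Fin n → ℝ} (hc : ∀ i, 0 ≤ c i) {i j : Fin n} (h : i < j) :
    S c i + c i ≤ S c j := by
  have h1 : S c i + c i = ∑ k ∈ Finset.Iic i, c k := by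
    rw [← Finset.Iio_insert, Finset.sum_insert (by simp)]
    unfold S; ring
  rw [h1, S]
  exact Finset.sum_le_sum_of_subset_of_nonneg
    (fun k hk => Finset.mem_Iio.mpr (lt_of_le_of_lt (Finset.mem_Iic.mp hk) h))
    (fun k _ _ => hc k)

lemma S_add_le_total {c : Fin n → ℝ} (hc : ∀ i, 0 ≤ c i) (i : Fin n) :
    S c i + c i ≤ ∑ j, c j := by
  have h1 : S c i + c i = ∑ k ∈ Finset.Iic i, c k := by
    rw [← Finset.Iio_insert, Finset.sum_insert (by simp)]
    unfold S; ring
  rw [h1]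
  exact Finset.sum_le_sum_of_subset_of_nonneg (Finset.subset_univ _) (fun k _ _ => hc k)

lemma seg_subset {c : Fin n → ℝ} (hc : ∀ i, 0 ≤ c i) (o : ℝ) (i : Fin n) :
    seg o c i ⊆ Ico o (o + ∑ j, c j) := by
  intro x hx
  obtain ⟨h1, h2⟩ := hx
  have h3 := S_nonneg hc i
  have h4 := S_add_le_total hc i
  exact ⟨by linarith, by linarith⟩

lemma seg_disjoint {c : Fin n → ℝ} (hc : ∀ i, 0 ≤ c i) (o : ℝ) {i j : Fin n}
    (h : i ≠ j) : Disjoint (seg o c i) (seg o c j) := by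
  rcases h.lt_or_gt with hlt | hlt
  · have := S_add_le hc hlt
    rw [Set.disjoint_left]
    rintro x ⟨_, h2⟩ ⟨h3, _⟩
    linarith
  · have := S_add_le hc hlt
    rw [Set.disjoint_left]
    rintro x ⟨h1, _⟩ ⟨_, h4⟩
    linarith

lemma seg_meas (o : ℝ) (c : Fin n → ℝ) (i : Fin n) : MeasurableSet (seg o c i) :=
  measurableSet_Ico

lemma vol_seg (o : ℝ) (c : Fin n → ℝ) (i : Fin n) :
    volume (seg o c i) = ENNReal.ofReal (c i) := by
  rw [seg, Real.volume_Ico, add_sub_cancel_left]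

lemma symmDiff_union_union {α : Type*} {C D E : Set α} (hCD : Disjoint C D)
    (hCE : Disjoint C E) : symmDiff (C ∪ D) (C ∪ E) = symmDiff D E := by
  ext x
  have h1 : x ∈ C → x ∉ D := fun h => Set.disjoint_left.mp hCD h
  have h2 : x ∈ C → x ∉ E := fun h => Set.disjoint_left.mp hCE h
  simp only [Set.mem_symmDiff, Set.mem_union]
  tauto

end PartCoupling

open PartCoupling

/-- Given two measurable partitions `(A₁,…,Aₙ)` and `(B₁,…,Bₙ)` of `[0,1]` with Lebesgue
measure, there exist partitions `(A₁',…,Aₙ')` and `(B₁',…,Bₙ')` with the same cell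
measures such that `λ(A_i' Δ B_i') = |λ(A_i) − λ(B_i)|` for every `i`. -/
theorem partitions_optimal_coupling (n : ℕ) (A B : Fin n → Set ℝ)
    (μ : Measure ℝ) (hμ : μ = volume.restrict (Icc (0:ℝ) 1))
    (hAsub : ∀ i, A i ⊆ Icc (0:ℝ) 1) (hBsub : ∀ i, B i ⊆ Icc (0:ℝ) 1)
    (hAmeas : ∀ i, MeasurableSet (A i)) (hBmeas : ∀ i, MeasurableSet (B i))
    (hAdisj : ∀ i j, i ≠ j → Disjoint (A i) (A j))
    (hBdisj : ∀ i j, i ≠ j → Disjoint (B i) (B j))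
    (hAcov : μ (Icc (0:ℝ) 1 \ ⋃ i, A i) = 0) (hBcov : μ (Icc (0:ℝ) 1 \ ⋃ i, B i) = 0) :
    ∃ A' B' : Fin n → Set ℝ,
      (∀ i, A' i ⊆ Icc (0:ℝ) 1) ∧ (∀ i, B' i ⊆ Icc (0:ℝ) 1) ∧
      (∀ i, MeasurableSet (A' i)) ∧ (∀ i, MeasurableSet (B' i)) ∧
      (∀ i j, i ≠ j → Disjoint (A' i) (A' j)) ∧
      (∀ i j, i ≠ j → Disjoint (B' i) (B' j)) ∧
      μ (Icc (0:ℝ) 1 \ ⋃ i, A' i) = 0 ∧ μ (Icc (0:ℝ) 1 \ ⋃ i, B' i) = 0 ∧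
      (∀ i, μ (A' i) = μ (A i)) ∧ (∀ i, μ (B' i) = μ (B i)) ∧
      (∀ i, (μ (symmDiff (A' i) (B' i))).toReal = |(μ (A i)).toReal - (μ (B i)).toReal|) := by
  -- basic facts about μ
  have hμIcc : μ (Icc (0:ℝ) 1) = 1 := by
    rw [hμ, Measure.restrict_apply_self, Real.volume_Icc]
    norm_num
  have hAfin : ∀ i, μ (A i) ≠ ⊤ := fun i =>
    (lt_of_le_of_lt (le_trans (measure_mono (hAsub i)) hμIcc.le) ENNReal.one_lt_top).ne
  have hBfin : ∀ i, μ (B i) ≠ ⊤ := fun i =>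
    (lt_of_le_of_lt (le_trans (measure_mono (hBsub i)) hμIcc.le) ENNReal.one_lt_top).ne
  -- the cells sum to measure 1
  have hIccEq : ∀ (C : Fin n → Set ℝ), (∀ i, C i ⊆ Icc (0:ℝ) 1) →
      μ (Icc (0:ℝ) 1 \ ⋃ i, C i) = 0 → μ (⋃ i, C i) = 1 := by
    intro C hCsub hCcov
    have hUsub : (⋃ i, C i) ⊆ Icc (0:ℝ) 1 := iUnion_subset hCsub
    have h1 : μ (Icc (0:ℝ) 1) ≤ μ (⋃ i, C i) := by
      have h := measure_le_inter_add_diff μ (Icc (0:ℝ) 1) (⋃ i, C i)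
      rw [hCcov, add_zero, Set.inter_eq_self_of_subset_right hUsub] at h
      exact h
    exact le_antisymm (le_trans (measure_mono hUsub) hμIcc.le) (hμIcc ▸ h1)
  have hsumA : ∑ i, μ (A i) = 1 := by
    rw [← tsum_fintype (L := SummationFilter.unconditional _), ← measure_iUnion (fun i j h => hAdisj i j h) hAmeas]
    exact hIccEq A hAsub hAcov
  have hsumB : ∑ i, μ (B i) = 1 := by
    rw [← tsum_fintype (L := SummationFilter.unconditional _), ← measure_iUnion (fun i j h => hBdisj i j h) hBmeas]
    exact hIccEq B hBsub hBcov
  -- real-valued data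
  set a : Fin n → ℝ := fun i => (μ (A i)).toReal with ha_def
  set b : Fin n → ℝ := fun i => (μ (B i)).toReal with hb_def
  have ha0 : ∀ i, 0 ≤ a i := fun i => ENNReal.toReal_nonneg
  have hb0 : ∀ i, 0 ≤ b i := fun i => ENNReal.toReal_nonneg
  have hasum : ∑ i, a i = 1 := by
    rw [ha_def, ← ENNReal.toReal_sum (fun i _ => hAfin i)]
    simp [hsumA]
  have hbsum : ∑ i, b i = 1 := by
    rw [hb_def, ← ENNReal.toReal_sum (fun i _ => hBfin i)]
    simp [hsumB]
  set c : Fin n → ℝ := fun i => min (a i) (b i) with hc_def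
  set dA : Fin n → ℝ := fun i => a i - c i with hdA_def
  set dB : Fin n → ℝ := fun i => b i - c i with hdB_def
  have hc0 : ∀ i, 0 ≤ c i := fun i => le_min (ha0 i) (hb0 i)
  have hdA0 : ∀ i, 0 ≤ dA i := fun i => sub_nonneg.mpr (min_le_left _ _)
  have hdB0 : ∀ i, 0 ≤ dB i := fun i => sub_nonneg.mpr (min_le_right _ _)
  set t : ℝ := ∑ i, c i with ht_def
  have ht0 : 0 ≤ t := Finset.sum_nonneg fun i _ => hc0 i
  have htA : t + ∑ i, dA i = 1 := by
    rw [ht_def, ← Finset.sum_add_distrib]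
    rw [Finset.sum_congr rfl fun x _ => show c x + dA x = a x by rw [hdA_def]; ring]
    exact hasum
  have htB : t + ∑ i, dB i = 1 := by
    rw [ht_def, ← Finset.sum_add_distrib]
    rw [Finset.sum_congr rfl fun x _ => show c x + dB x = b x by rw [hdB_def]; ring]
    exact hbsum
  have ht1 : t ≤ 1 := by
    have := Finset.sum_nonneg fun i (_ : i ∈ Finset.univ) => hdA0 i
    linarith
  -- the new partitions
  set A' : Fin n → Set ℝ := fun i => seg 0 c i ∪ seg t dA i with hA'_def
  set B' : Fin n → Set ℝ := fun i => seg 0 c i ∪ seg t dB i with hB'_def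
  -- generic facts for a tail function d
  have hsegc_sub : ∀ i, seg 0 c i ⊆ Icc (0:ℝ) 1 := by
    intro i x hx
    obtain ⟨h1, h2⟩ := seg_subset hc0 0 i hx
    rw [zero_add] at h2
    exact ⟨h1, by linarith⟩
  have hsegd_sub : ∀ (d : Fin n → ℝ), (∀ i, 0 ≤ d i) → t + ∑ i, d i = 1 →
      ∀ i, seg t d i ⊆ Icc (0:ℝ) 1 := by
    intro d hd hsum i x hx
    obtain ⟨h1, h2⟩ := seg_subset hd t i hx
    exact ⟨by linarith, by linarith⟩
  have hcross : ∀ (d : Fin n → ℝ), (∀ i, 0 ≤ d i) → ∀ i j,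
      Disjoint (seg 0 c i) (seg t d j) := by
    intro d hd i j
    rw [Set.disjoint_left]
    intro x hx1 hx2
    obtain ⟨_, h2⟩ := seg_subset hc0 0 i hx1
    obtain ⟨h3, _⟩ := seg_subset hd t j hx2
    rw [zero_add] at h2
    linarith
  have hP'sub : ∀ (d : Fin n → ℝ), (∀ i, 0 ≤ d i) → t + ∑ i, d i = 1 →
      ∀ i, seg 0 c i ∪ seg t d i ⊆ Icc (0:ℝ) 1 := fun d hd hsum i =>
    union_subset (hsegc_sub i) (hsegd_sub d hd hsum i)
  have hP'meas : ∀ (d : Fin n → ℝ) (i : Fin n),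
      MeasurableSet (seg 0 c i ∪ seg t d i) := fun d i =>
    (seg_meas _ _ _).union (seg_meas _ _ _)
  have hP'disj : ∀ (d : Fin n → ℝ), (∀ i, 0 ≤ d i) → ∀ i j, i ≠ j →
      Disjoint (seg 0 c i ∪ seg t d i) (seg 0 c j ∪ seg t d j) := by
    intro d hd i j hij
    rw [Set.disjoint_union_left]
    constructor
    · rw [Set.disjoint_union_right]
      exact ⟨seg_disjoint hc0 0 hij, hcross d hd i j⟩
    · rw [Set.disjoint_union_right]
      exact ⟨(hcross d hd j i).symm, seg_disjoint hd t hij⟩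
  have hμeq : ∀ (s : Set ℝ), MeasurableSet s → s ⊆ Icc (0:ℝ) 1 → μ s = volume s := by
    intro s hs hsub
    rw [hμ, Measure.restrict_apply hs, Set.inter_eq_self_of_subset_left hsub]
  have hP'vol : ∀ (d : Fin n → ℝ), (∀ i, 0 ≤ d i) → t + ∑ i, d i = 1 →
      ∀ i, μ (seg 0 c i ∪ seg t d i) = ENNReal.ofReal (c i + d i) := by
    intro d hd hsum i
    rw [hμeq _ (hP'meas d i) (hP'sub d hd hsum i),
      measure_union (hcross d hd i i) (seg_meas _ _ _), vol_seg, vol_seg,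
      ← ENNReal.ofReal_add (hc0 i) (hd i)]
  have hA'vol : ∀ i, μ (A' i) = μ (A i) := by
    intro i
    rw [hA'_def]
    have h1 := hP'vol dA hdA0 htA i
    have h2 : c i + dA i = a i := by rw [hdA_def]; ring
    rw [h1, h2, ha_def, ENNReal.ofReal_toReal (hAfin i)]
  have hB'vol : ∀ i, μ (B' i) = μ (B i) := by
    intro i
    rw [hB'_def]
    have h1 := hP'vol dB hdB0 htB i
    have h2 : c i + dB i = b i := by rw [hdB_def]; ring
    rw [h1, h2, hb_def, ENNReal.ofReal_toReal (hBfin i)]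
  -- covering property
  have hcov : ∀ (P : Fin n → Set ℝ), (∀ i, MeasurableSet (P i)) →
      (∀ i, P i ⊆ Icc (0:ℝ) 1) → (∀ i j, i ≠ j → Disjoint (P i) (P j)) →
      (∑ i, μ (P i)) = 1 → μ (Icc (0:ℝ) 1 \ ⋃ i, P i) = 0 := by
    intro P hPm hPs hPd hPsum
    have hU : μ (⋃ i, P i) = 1 := by
      rw [measure_iUnion (fun i j h => hPd i j h) hPm, tsum_fintype]; exact hPsum
    have hUm : MeasurableSet (⋃ i, P i) := MeasurableSet.iUnion hPm
    rw [measure_diff (iUnion_subset hPs) hUm.nullMeasurableSet (by rw [hU]; exact ENNReal.one_ne_top),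
      hμIcc, hU, tsub_self]
  -- the symmDiff computation
  have hsymm : ∀ i, (μ (symmDiff (A' i) (B' i))).toReal = |a i - b i| := by
    intro i
    rcases le_total (a i) (b i) with h | h
    · have hdAi : dA i = 0 := by rw [hdA_def, hc_def]; simp [min_eq_left h]
      have hsegA : seg t dA i = ∅ := by
        rw [seg, hdAi, add_zero, Ico_self]
      have hs : symmDiff (A' i) (B' i) = seg t dB i := by
        rw [hA'_def, hB'_def, symmDiff_union_union (hsegA ▸ disjoint_empty _)
          (hcross dB hdB0 i i), hsegA]
        simp [Set.symmDiff_def]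
      rw [hs, hμeq _ (seg_meas _ _ _) (hsegd_sub dB hdB0 htB i), vol_seg,
        ENNReal.toReal_ofReal (hdB0 i), hdB_def, hc_def]
      simp only [min_eq_left h]
      rw [abs_sub_comm, abs_of_nonneg (by linarith)]
    · have hdBi : dB i = 0 := by rw [hdB_def, hc_def]; simp [min_eq_right h]
      have hsegB : seg t dB i = ∅ := by
        rw [seg, hdBi, add_zero, Ico_self]
      have hs : symmDiff (A' i) (B' i) = seg t dA i := by
        rw [hA'_def, hB'_def, symmDiff_union_union (hcross dA hdA0 i i)
          (hsegB ▸ disjoint_empty _), hsegB]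
        simp [Set.symmDiff_def]
      rw [hs, hμeq _ (seg_meas _ _ _) (hsegd_sub dA hdA0 htA i), vol_seg,
        ENNReal.toReal_ofReal (hdA0 i), hdA_def, hc_def]
      simp only [min_eq_right h]
      rw [abs_of_nonneg (by linarith)]
  refine ⟨A', B', hP'sub dA hdA0 htA, hP'sub dB hdB0 htB, hP'meas dA, hP'meas dB,
    hP'disj dA hdA0, hP'disj dB hdB0,
    hcov A' (hP'meas dA) (hP'sub dA hdA0 htA) (hP'disj dA hdA0)
      (by rw [Finset.sum_congr rfl fun i _ => hA'vol i]; exact hsumA),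
    hcov B' (hP'meas dB) (hP'sub dB hdB0 htB) (hP'disj dB hdB0)
      (by rw [Finset.sum_congr rfl fun i _ => hB'vol i]; exact hsumB),
    hA'vol, hB'vol, hsymm⟩
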